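/- Let G be a finite directed graph with nonnegative edge weights, let γ > 0 and ε > 0, and let f be a vertex. Let A₁, …, A_t be walks with no repeated vertices, where each A_i is a shortest walk from a vertex a_i to a vertex b_i of length at most γ, and suppose f lies on every A_i. For i < j, let z_{ij} be the first vertex of A_j (in the order along A_j) that lies on A_i, and suppose that for all i < j the concatenation of A_j[a_j, z_{ij}] with A_i[z_{ij}, b_i] has length greater than (1+ε)γ. Then t ≤ 1/ε + 1. -/

import Mathlib

/-- A walk in the directed graph with edge relation `E`: a nonempty list of vertices
starting at `u`, ending at `v`, with every consecutive pair an edge. -/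
def IsWalk {V : Type*} (E : V → V → Prop) (l : List V) (u v : V) : Prop :=
  l ≠ [] ∧ l.head? = some u ∧ l.getLast? = some v ∧ l.Chain' E

/-- The length of a walk: the sum of the weights of its consecutive pairs. -/
def walkLen {V : Type*} (w : V → V → ℝ) (l : List V) : ℝ :=
  ((l.zip l.tail).map fun q => w q.1 q.2).sum

/-- A shortest walk from `u` to `v`. -/
def IsShortestWalk {V : Type*} (E : V → V → Prop) (w : V → V → ℝ)
    (l : List V) (u v : V) : Prop :=
  IsWalk E l u v ∧ ∀ l', IsWalk E l' u v → walkLen w l ≤ walkLen w l'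

/-- The sub-walk of the (duplicate-free) walk `l` from the occurrence of `x` to the
occurrence of `y` (for `x` occurring no later than `y`). -/
def subwalk {V : Type*} [DecidableEq V] (l : List V) (x y : V) : List V :=
  (l.drop (l.idxOf x)).take (l.idxOf y - l.idxOf x + 1)

section Aux

variable {V : Type*} [DecidableEq V] {E : V → V → Prop} {w : V → V → ℝ}

lemma walkLen_nil : walkLen w ([] : List V) = 0 := rfl
lemma walkLen_single (x : V) : walkLen w [x] = 0 := rfl
lemma walkLen_cons_cons (x y : V) (l : List V) :
    walkLen w (x :: y :: l) = w x y + walkLen w (y :: l) := by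
  simp [walkLen]

lemma walkLen_nonneg (hw : ∀ x y, 0 ≤ w x y) (l : List V) :
    0 ≤ walkLen w l := by
  induction l with
  | nil => simp [walkLen_nil]
  | cons x l ih =>
    cases l with
    | nil => simp [walkLen_single]
    | cons y m => rw [walkLen_cons_cons]; exact add_nonneg (hw x y) ih

lemma walkLen_split (p : List V) (x : V) (s : List V) :
    walkLen w (p ++ (x :: s)) = walkLen w (p ++ [x]) + walkLen w (x :: s) := by
  induction p with
  | nil => simp [walkLen_single]
  | cons a p ih =>
    cases p with
    | nil =>
      cases s with
      | nil => simp [walkLen_cons_cons, walkLen_single]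
      | cons b s => simp [walkLen_cons_cons, walkLen_single]
    | cons c p' =>
      simp only [List.cons_append, walkLen_cons_cons] at *
      rw [ih]; ring

lemma indexOf_decomp (p s : List V) (x : V) (h : x ∉ p) :
    (p ++ (x :: s)).idxOf x = p.length := by
  simp [List.idxOf_append_of_notMem h, List.idxOf_cons_self]

lemma subwalk_eq (p m s : List V) (x y : V)
    (hnd : (p ++ (x :: (m ++ (y :: s)))).Nodup) :
    subwalk (p ++ (x :: (m ++ (y :: s)))) x y = x :: (m ++ [y]) := by
  have hd := List.disjoint_of_nodup_append hnd
  have hx : x ∉ p := fun h => hd h (by simp)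
  have hy1 : y ∉ p := fun h => hd h (by simp)
  have hr := List.nodup_cons.mp (hnd.of_append_right)
  have hxy : x ≠ y := fun h => hr.1 (by simp [h])
  have hy2 : y ∉ m := fun h => (List.disjoint_of_nodup_append hr.2) h (by simp)
  have hix : (p ++ (x :: (m ++ (y :: s)))).idxOf x = p.length := indexOf_decomp _ _ _ hx
  have hl : p ++ (x :: (m ++ (y :: s))) = (p ++ (x :: m)) ++ (y :: s) := by simp
  have hiy : (p ++ (x :: (m ++ (y :: s)))).idxOf y = p.length + (m.length + 1) := by
    rw [hl, indexOf_decomp _ _ _ (by simp [hy1, hy2, Ne.symm hxy])]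
    simp
  unfold subwalk
  rw [hix, hiy, List.drop_left]
  have h2 : p.length + (m.length + 1) - p.length + 1 = (x :: m).length + 1 := by simp
  rw [h2, show x :: (m ++ (y :: s)) = (x :: m) ++ (y :: s) by simp, List.take_append]
  simp

lemma subwalk_refl (p s : List V) (x : V) (h : x ∉ p) :
    subwalk (p ++ (x :: s)) x x = [x] := by
  unfold subwalk
  rw [indexOf_decomp _ _ _ h, List.drop_left]
  simp

lemma indexOf_inj {l : List V} (hnd : l.Nodup) {x y : V} (hx : x ∈ l) (hy : y ∈ l)
    (h : l.idxOf x = l.idxOf y) : x = y := by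
  have h1 : l[l.idxOf x]'(List.idxOf_lt_length_iff.2 hx) = x := List.getElem_idxOf _
  have h2 : l[l.idxOf y]'(List.idxOf_lt_length_iff.2 hy) = y := List.getElem_idxOf _
  rw [← h1, ← h2]
  congr 1

lemma mem_of_decomp_prefix {l p : List V} {x : V} (hnd : l.Nodup) (hx : x ∈ l)
    (hp : ∃ s, l = p ++ s) (hlt : l.idxOf x < p.length) : x ∈ p := by
  obtain ⟨s, rfl⟩ := hp
  have h1 : (p ++ s)[(p ++ s).idxOf x]'(List.idxOf_lt_length_iff.2 hx) = x :=
    List.getElem_idxOf _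
  rw [List.getElem_append_left hlt] at h1
  rw [← h1]
  exact List.getElem_mem _

lemma decomp_two {l : List V} {x y : V} (hnd : l.Nodup) (hx : x ∈ l) (hy : y ∈ l)
    (hlt : l.idxOf x < l.idxOf y) :
    ∃ p m s, l = p ++ (x :: (m ++ (y :: s))) := by
  obtain ⟨p1, s, rfl⟩ := List.append_of_mem hy
  have hy1 : y ∉ p1 := fun h => (List.disjoint_of_nodup_append hnd) h (by simp)
  have hiy : (p1 ++ (y :: s)).idxOf y = p1.length := indexOf_decomp _ _ _ hy1
  have hxp : x ∈ p1 := by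
    refine mem_of_decomp_prefix hnd hx ⟨y :: s, rfl⟩ ?_
    omega
  obtain ⟨p, m, rfl⟩ := List.append_of_mem hxp
  exact ⟨p, m, s, by simp⟩

lemma decomp_three {l : List V} {x y z : V} (hnd : l.Nodup) (hx : x ∈ l) (hy : y ∈ l)
    (hz : z ∈ l) (h1 : l.idxOf x < l.idxOf y) (h2 : l.idxOf y < l.idxOf z) :
    ∃ p m1 m2 s, l = p ++ (x :: (m1 ++ (y :: (m2 ++ (z :: s))))) := by
  obtain ⟨p1, m2, s, rfl⟩ := decomp_two hnd hy hz h2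
  have hy1 : y ∉ p1 := by
    intro h
    exact (List.disjoint_of_nodup_append hnd) h (by simp)
  have hiy : (p1 ++ (y :: (m2 ++ (z :: s)))).idxOf y = p1.length := indexOf_decomp _ _ _ hy1
  have hxp : x ∈ p1 := by
    refine mem_of_decomp_prefix hnd hx ⟨y :: (m2 ++ (z :: s)), rfl⟩ ?_
    omega
  obtain ⟨p, m1, rfl⟩ := List.append_of_mem hxp
  exact ⟨p, m1, m2, s, by simp⟩

lemma idx_head {l : List V} {u v : V} (hwk : IsWalk E l u v) : l.idxOf u = 0 := by
  obtain ⟨hne, hh, -, -⟩ := hwk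
  cases l with
  | nil => exact absurd rfl hne
  | cons a t =>
    simp only [List.head?_cons, Option.some.injEq] at hh
    rw [← hh, List.idxOf_cons_self]

lemma idx_last {l : List V} {u v : V} (hwk : IsWalk E l u v) (hnd : l.Nodup)
    {x : V} (hx : x ∈ l) : l.idxOf x ≤ l.idxOf v := by
  obtain ⟨hne, -, hl, -⟩ := hwk
  have hv : v = l.getLast hne := by
    rw [List.getLast?_eq_getLast hne] at hl
    exact ((Option.some.injEq _ _).mp hl).symm
  have hdec : l.dropLast ++ [v] = l := by rw [hv]; exact List.dropLast_append_getLast hne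
  have hvd : v ∉ l.dropLast := by
    intro h
    have := hnd
    rw [← hdec] at this
    exact (List.disjoint_of_nodup_append this) h (by simp)
  have hiv : l.idxOf v = l.dropLast.length := by
    conv_lhs => rw [← hdec]
    exact indexOf_decomp _ _ _ hvd
  have hxl : l.idxOf x < l.length := List.idxOf_lt_length_iff.2 hx
  have : l.length = l.dropLast.length + 1 := by
    conv_lhs => rw [← hdec]
    simp
  omega

lemma subwalk_self_mem {l : List V} (hnd : l.Nodup) {x : V} (hx : x ∈ l) :
    subwalk l x x = [x] := by
  obtain ⟨p, s, rfl⟩ := List.append_of_mem hx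
  exact subwalk_refl p s x (fun h => (List.disjoint_of_nodup_append hnd) h (by simp))

lemma isWalk_subwalk {l : List V} (hnd : l.Nodup) (hc : l.Chain' E) {x y : V}
    (hx : x ∈ l) (hy : y ∈ l) (hle : l.idxOf x ≤ l.idxOf y) :
    IsWalk E (subwalk l x y) x y := by
  rcases eq_or_lt_of_le hle with heq | hlt
  · have hxy : x = y := indexOf_inj hnd hx hy heq
    subst hxy
    rw [subwalk_self_mem hnd hx]
    exact ⟨by simp, rfl, rfl, List.isChain_singleton x⟩
  · have hch : (subwalk l x y).Chain' E := List.IsChain.take (hc.drop _) _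
    obtain ⟨p, m, s, rfl⟩ := decomp_two hnd hx hy hlt
    rw [subwalk_eq p m s x y hnd] at hch ⊢
    refine ⟨by simp, by simp, ?_, hch⟩
    rw [show x :: (m ++ [y]) = (x :: m) ++ [y] by simp, List.getLast?_append]
    simp

lemma walkLen_subwalk_split {l : List V} (hnd : l.Nodup) {x y z : V}
    (hx : x ∈ l) (hy : y ∈ l) (hz : z ∈ l)
    (h1 : l.idxOf x ≤ l.idxOf y) (h2 : l.idxOf y ≤ l.idxOf z) :
    walkLen w (subwalk l x z) = walkLen w (subwalk l x y) + walkLen w (subwalk l y z) := by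
  rcases eq_or_lt_of_le h1 with heq1 | hlt1
  · have : x = y := indexOf_inj hnd hx hy heq1
    subst this
    rw [subwalk_self_mem hnd hx, walkLen_single]
    ring
  rcases eq_or_lt_of_le h2 with heq2 | hlt2
  · have : y = z := indexOf_inj hnd hy hz heq2
    subst this
    rw [subwalk_self_mem hnd hy, walkLen_single]
    ring
  obtain ⟨p, m1, m2, s, rfl⟩ := decomp_three hnd hx hy hz hlt1 hlt2
  have hB : subwalk (p ++ (x :: (m1 ++ (y :: (m2 ++ (z :: s)))))) x y = x :: (m1 ++ [y]) :=
    subwalk_eq p m1 (m2 ++ (z :: s)) x y hnd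
  have e1 : p ++ (x :: (m1 ++ (y :: (m2 ++ (z :: s)))))
      = p ++ (x :: ((m1 ++ (y :: m2)) ++ (z :: s))) := by simp
  have hA : subwalk (p ++ (x :: (m1 ++ (y :: (m2 ++ (z :: s)))))) x z
      = x :: ((m1 ++ (y :: m2)) ++ [z]) := by
    rw [e1]
    exact subwalk_eq p (m1 ++ (y :: m2)) s x z (e1 ▸ hnd)
  have e2 : p ++ (x :: (m1 ++ (y :: (m2 ++ (z :: s)))))
      = (p ++ (x :: m1)) ++ (y :: (m2 ++ (z :: s))) := by simp
  have hC : subwalk (p ++ (x :: (m1 ++ (y :: (m2 ++ (z :: s)))))) y z = y :: (m2 ++ [z]) := by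
    rw [e2]
    exact subwalk_eq (p ++ (x :: m1)) m2 s y z (e2 ▸ hnd)
  rw [hA, hB, hC]
  have e3 : x :: ((m1 ++ (y :: m2)) ++ [z]) = (x :: m1) ++ (y :: (m2 ++ [z])) := by simp
  rw [e3, walkLen_split (x :: m1) y (m2 ++ [z]),
    show (x :: m1) ++ [y] = x :: (m1 ++ [y]) by simp]

lemma subwalk_full {l : List V} {u v : V} (hwk : IsWalk E l u v) (hnd : l.Nodup) :
    subwalk l u v = l := by
  obtain ⟨hne, hh, hl, -⟩ := hwk
  cases l with
  | nil => exact absurd rfl hne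
  | cons a t =>
    simp only [List.head?_cons, Option.some.injEq] at hh
    subst hh
    rcases eq_or_ne t [] with rfl | htne
    · have hvu : v = a := by simpa using hl.symm
      subst hvu
      exact subwalk_self_mem (by simpa using hnd) (by simp)
    · obtain ⟨c, z, rfl⟩ : ∃ c z, t = c ++ [z] :=
        ⟨t.dropLast, t.getLast htne, (List.dropLast_append_getLast htne).symm⟩
      have hzv : v = z := by
        have : (a :: (c ++ [z])).getLast? = some z := by
          rw [show a :: (c ++ [z]) = (a :: c) ++ [z] by simp, List.getLast?_append]
          simp
        rw [this] at hl
        simpa using hl.symm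
      subst hzv
      have hdec : a :: (c ++ [v]) = [] ++ (a :: (c ++ (v :: []))) := by simp
      rw [hdec]
      rw [subwalk_eq [] c [] a v (by simpa using hnd)]
      simp

lemma shortest_subwalk_le {l : List V} {u v : V} (hs : IsShortestWalk E w l u v)
    (hnd : l.Nodup) {x y : V} (hx : x ∈ l) (hy : y ∈ l)
    (hlt : l.idxOf x < l.idxOf y) {m' : List V} (hm : IsWalk E m' x y) :
    walkLen w (subwalk l x y) ≤ walkLen w m' := by
  obtain ⟨⟨hne, hh, hl, hc⟩, hmin⟩ := hs
  have hxy : x ≠ y := fun h => by rw [h] at hlt; exact lt_irrefl _ hlt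
  obtain ⟨p, m, s, rfl⟩ := decomp_two hnd hx hy hlt
  obtain ⟨hne', hh', hl', hc'⟩ := hm
  obtain ⟨t, rfl⟩ : ∃ t, m' = x :: t := by
    cases m' with
    | nil => exact absurd rfl hne'
    | cons a t =>
      refine ⟨t, ?_⟩
      have : a = x := by simpa using hh'
      rw [this]
  have htne : t ≠ [] := by
    rintro rfl
    exact hxy (by simpa using hl')
  obtain ⟨c, z, rfl⟩ : ∃ c z, t = c ++ [z] :=
    ⟨t.dropLast, t.getLast htne, (List.dropLast_append_getLast htne).symm⟩
  have hzy : y = z := by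
    have : (x :: (c ++ [z])).getLast? = some z := by
      rw [show x :: (c ++ [z]) = (x :: c) ++ [z] by simp, List.getLast?_append]
      simp
    rw [this] at hl'
    simpa using hl'.symm
  subst hzy
  -- chain facts about l
  rw [List.Chain', List.isChain_append] at hc
  obtain ⟨hcp, hcrest, hjunc⟩ := hc
  have hcys : (y :: s).Chain' E := by
    have h2 := hcrest
    rw [show x :: (m ++ (y :: s)) = (x :: m) ++ (y :: s) by simp, List.isChain_append] at h2
    exact h2.2.1
  have hys := List.isChain_cons.mp hcys
  -- R is a walk from u to v
  have hRwalk : IsWalk E (p ++ (x :: (c ++ (y :: s)))) u v := by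
    refine ⟨by simp, ?_, ?_, ?_⟩
    · rw [List.head?_append]
      rw [List.head?_append] at hh
      simpa using hh
    · rw [show p ++ (x :: (c ++ (y :: s))) = (p ++ (x :: c)) ++ (y :: s) by simp,
        List.getLast?_append]
      rw [show p ++ (x :: (m ++ (y :: s))) = (p ++ (x :: m)) ++ (y :: s) by simp,
        List.getLast?_append] at hl
      obtain ⟨lv, hlv⟩ : ∃ a', (y :: s).getLast? = some a' :=
        ⟨_, List.getLast?_eq_getLast (by simp)⟩
      rw [hlv] at hl ⊢
      simpa using hl
    · rw [List.Chain', List.isChain_append]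
      refine ⟨hcp, ?_, by simpa using hjunc⟩
      rw [show x :: (c ++ (y :: s)) = (x :: (c ++ [y])) ++ s by simp, List.isChain_append]
      refine ⟨hc', hys.2, ?_⟩
      intro a' ha' b' hb'
      have haa : a' = y := by
        rw [show x :: (c ++ [y]) = (x :: c) ++ [y] by simp, List.getLast?_append] at ha'
        simpa using ha'.symm
      subst haa
      exact hys.1 b' hb'
  -- lengths
  have wR : walkLen w (p ++ (x :: (c ++ (y :: s))))
      = walkLen w (p ++ [x]) + walkLen w (x :: (c ++ [y])) + walkLen w (y :: s) := by
    rw [walkLen_split p x (c ++ (y :: s)),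
      show x :: (c ++ (y :: s)) = (x :: c) ++ (y :: s) by simp,
      walkLen_split (x :: c) y s]
    rw [show (x :: c) ++ [y] = x :: (c ++ [y]) by simp]
    ring
  have wL : walkLen w (p ++ (x :: (m ++ (y :: s))))
      = walkLen w (p ++ [x]) + walkLen w (x :: (m ++ [y])) + walkLen w (y :: s) := by
    rw [walkLen_split p x (m ++ (y :: s)),
      show x :: (m ++ (y :: s)) = (x :: m) ++ (y :: s) by simp,
      walkLen_split (x :: m) y s]
    rw [show (x :: m) ++ [y] = x :: (m ++ [y]) by simp]
    ring
  have hsub : subwalk (p ++ (x :: (m ++ (y :: s)))) x y = x :: (m ++ [y]) :=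
    subwalk_eq p m s x y hnd
  have hle := hmin _ hRwalk
  rw [wR, wL] at hle
  rw [hsub]
  linarith

end Aux

/-- If `A₁, …, A_t` are duplicate-free shortest walks of length at most
`γ`, all through the vertex `f`, and for all `i < j` the concatenation of `A_j` up to
the first vertex `z` of `A_j` lying on `A_i` with the portion of `A_i` from `z` onward
is longer than `(1+ε)γ`, then `t ≤ 1/ε + 1`. -/
theorem stmt_14 {V : Type*} [Fintype V] [DecidableEq V] (E : V → V → Prop)
    (w : V → V → ℝ) (hw : ∀ x y, 0 ≤ w x y)
    (γ ε : ℝ) (hγ : 0 < γ) (hε : 0 < ε) (f : V)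
    (t : ℕ) (A : Fin t → List V) (a b : Fin t → V)
    (hnd : ∀ i, (A i).Nodup)
    (hshort : ∀ i, IsShortestWalk E w (A i) (a i) (b i))
    (hlen : ∀ i, walkLen w (A i) ≤ γ)
    (hf : ∀ i, f ∈ A i)
    (hbad : ∀ i j : Fin t, i < j → ∀ z : V,
      z ∈ A j → z ∈ A i →
      (∀ z' ∈ A j, z' ∈ A i → (A j).idxOf z ≤ (A j).idxOf z') →
      (1 + ε) * γ <
        walkLen w (subwalk (A j) (a j) z) + walkLen w (subwalk (A i) z (b i))) :
    (t : ℝ) ≤ 1 / ε + 1 := by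
  rcases Nat.eq_zero_or_pos t with rfl | ht
  · simp
    positivity
  set X : Fin t → ℝ := fun i => walkLen w (subwalk (A i) (a i) f) with hX
  set Y : Fin t → ℝ := fun i => walkLen w (subwalk (A i) f (b i)) with hY
  have hwalk : ∀ i, IsWalk E (A i) (a i) (b i) := fun i => (hshort i).1
  have hmemA : ∀ i, a i ∈ A i := by
    intro i
    have h := (hwalk i).2.1
    exact List.mem_of_mem_head? (by rw [h]; simp)
  have hmemB : ∀ i, b i ∈ A i := by
    intro i
    have h := (hwalk i).2.2.1
    exact List.mem_of_mem_getLast? (by rw [h]; simp)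
  have hXY : ∀ i, X i + Y i = walkLen w (A i) := by
    intro i
    have h := walkLen_subwalk_split (w := w) (hnd i) (hmemA i) (hf i) (hmemB i)
      (by rw [idx_head (hwalk i)]; exact Nat.zero_le _)
      (idx_last (hwalk i) (hnd i) (hf i))
    rw [subwalk_full (hwalk i) (hnd i)] at h
    exact h.symm
  have hX0 : ∀ i, 0 ≤ X i := fun i => walkLen_nonneg hw _
  have hY0 : ∀ i, 0 ≤ Y i := fun i => walkLen_nonneg hw _
  have hXγ : ∀ i, X i ≤ γ := by
    intro i
    have := hXY i
    have := hlen i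
    have := hY0 i
    linarith
  have hgap : ∀ i j, i < j → X i + ε * γ < X j := by
    intro i j hij
    have hex : ∃ n, ∃ h : n < (A j).length, (A j)[n] ∈ A i :=
      ⟨(A j).idxOf f, List.idxOf_lt_length_iff.2 (hf j),
        by rw [List.getElem_idxOf]; exact hf i⟩
    obtain ⟨hn, hzi⟩ := Nat.find_spec hex
    set n := Nat.find hex with hndef
    set z := (A j)[n]'hn with hz
    have hzj : z ∈ A j := List.getElem_mem hn
    have hidxzn : (A j).idxOf z = n := by
      have h1 : (A j).idxOf z < (A j).length := List.idxOf_lt_length_iff.2 hzj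
      have h2 : (A j)[(A j).idxOf z]'h1 = (A j)[n]'hn := by
        rw [List.getElem_idxOf]
      exact ((hnd j).getElem_inj_iff).mp h2
    have hmin : ∀ z' ∈ A j, z' ∈ A i → (A j).idxOf z ≤ (A j).idxOf z' := by
      intro z' h1 h2
      rw [hidxzn]
      exact Nat.find_min' hex ⟨List.idxOf_lt_length_iff.2 h1,
        by rw [List.getElem_idxOf]; exact h2⟩
    have key := hbad i j hij z hzj hzi hmin
    have hzfj : (A j).idxOf z ≤ (A j).idxOf f := hmin f (hf j) (hf i)
    have hXj : X j = walkLen w (subwalk (A j) (a j) z) + walkLen w (subwalk (A j) z f) :=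
      walkLen_subwalk_split (hnd j) (hmemA j) hzj (hf j)
        (by rw [idx_head (hwalk j)]; exact Nat.zero_le _) hzfj
    have hkey2 : walkLen w (subwalk (A j) (a j) z) + walkLen w (subwalk (A i) z (b i))
        ≤ X j + Y i := by
      rcases le_or_gt ((A i).idxOf f) ((A i).idxOf z) with hcase | hcase
      · have hYi : Y i = walkLen w (subwalk (A i) f z) + walkLen w (subwalk (A i) z (b i)) :=
          walkLen_subwalk_split (hnd i) (hf i) hzi (hmemB i) hcase
            (idx_last (hwalk i) (hnd i) hzi)
        have h1 : 0 ≤ walkLen w (subwalk (A j) z f) := walkLen_nonneg hw _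
        have h2 : 0 ≤ walkLen w (subwalk (A i) f z) := walkLen_nonneg hw _
        linarith
      · have hQ : walkLen w (subwalk (A i) z (b i))
            = walkLen w (subwalk (A i) z f) + Y i :=
          walkLen_subwalk_split (hnd i) hzi (hf i) (hmemB i) (le_of_lt hcase)
            (idx_last (hwalk i) (hnd i) (hf i))
        have hmw : IsWalk E (subwalk (A j) z f) z f :=
          isWalk_subwalk (hnd j) (hwalk j).2.2.2 hzj (hf j) hzfj
        have hle : walkLen w (subwalk (A i) z f) ≤ walkLen w (subwalk (A j) z f) :=
          shortest_subwalk_le (hshort i) (hnd i) hzi (hf i) hcase hmw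
        linarith
    have h3 : (1 + ε) * γ < X j + Y i := lt_of_lt_of_le key hkey2
    have h4 : X i + Y i ≤ γ := by rw [hXY i]; exact hlen i
    have h5 : (1 + ε) * γ = γ + ε * γ := by ring
    linarith
  have hchain : ∀ k : ℕ, ∀ hk : k < t, (k : ℝ) * (ε * γ) + X ⟨0, ht⟩ ≤ X ⟨k, hk⟩ := by
    intro k
    induction k with
    | zero => intro hk; simp
    | succ k ih =>
      intro hk
      have hk' : k < t := Nat.lt_of_succ_lt hk
      have h1 := ih hk'
      have h2 := hgap ⟨k, hk'⟩ ⟨k + 1, hk⟩ (by simp [Fin.lt_def])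
      push_cast
      linarith
  have hlast := hchain (t - 1) (by omega)
  have h5 : X ⟨t - 1, by omega⟩ ≤ γ := hXγ _
  have h6 : 0 ≤ X ⟨0, ht⟩ := hX0 _
  have h7 : ((t - 1 : ℕ) : ℝ) * (ε * γ) ≤ γ := by linarith
  have h8 : ((t - 1 : ℕ) : ℝ) = (t : ℝ) - 1 := by
    rw [Nat.cast_sub ht]
    simp
  rw [h8] at h7
  have h9 : ((t : ℝ) - 1) * ε ≤ 1 := by
    rw [← mul_le_mul_iff_of_pos_right hγ]
    calc ((t : ℝ) - 1) * ε * γ = ((t : ℝ) - 1) * (ε * γ) := by ring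
    _ ≤ γ := h7
    _ = 1 * γ := by ring
  have h10 : (t : ℝ) - 1 ≤ 1 / ε := by
    rw [le_div_iff₀ hε]
    exact h9
  linarith
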